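/- For real α ≥ 0, the integral (1/√(2π)) ∫₀¹ (1 − x^α·c(x) − (1−x)^α·c(1−x))·(x(1−x))^{−3/2} dx equals 2√2·α·Γ(3/2 + α)/Γ(2 + α), where c(x) = x²(3 − 2x). -/

import Mathlib

open Real

/-- The limiting split function `c(x) = x²(3-2x)`. -/
def cfun (x : ℝ) : ℝ := x ^ 2 * (3 - 2 * x)

open MeasureTheory Set intervalIntegral Filter

lemma beta_II {p q : ℝ} (hp : -1 < p) (hq : -1 < q) :
    IntervalIntegrable (fun x : ℝ => x ^ p * (1 - x) ^ q) volume 0 1 := by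
  have h1 : IntervalIntegrable (fun x : ℝ => x ^ p * (1 - x) ^ q) volume 0 (1/2) := by
    apply (intervalIntegrable_rpow' hp).mul_continuousOn
    apply ContinuousOn.rpow_const (by fun_prop)
    intro x hx
    rw [uIcc_of_le (by norm_num)] at hx
    exact Or.inl (by rcases hx with ⟨_, h2⟩; norm_num; linarith)
  have h2 : IntervalIntegrable (fun x : ℝ => x ^ p * (1 - x) ^ q) volume (1/2) 1 := by
    have base : IntervalIntegrable (fun x : ℝ => (1 - x) ^ q) volume (1/2) 1 := by
      have := (intervalIntegrable_rpow' hq (a := 0) (b := 1/2)).comp_sub_left 1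
      norm_num at this
      exact this.symm
    have := base.continuousOn_mul (g := fun x : ℝ => x ^ p) ?_
    · exact this
    · apply ContinuousOn.rpow_const (by fun_prop)
      intro x hx
      rw [uIcc_of_le (by norm_num)] at hx
      exact Or.inl (by rcases hx with ⟨h2, _⟩; positivity)
  exact h1.trans h2

lemma beta_int {p q : ℝ} (hp : -1 < p) (hq : -1 < q) :
    IntegrableOn (fun x : ℝ => x ^ p * (1 - x) ^ q) (Ioo 0 1) volume := by
  have := beta_II hp hq
  rwa [intervalIntegrable_iff_integrableOn_Ioo_of_le (by norm_num)] at this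

lemma beta_val {a b : ℝ} (ha : 0 < a) (hb : 0 < b) :
    ∫ x in Ioo (0:ℝ) 1, x ^ (a-1) * (1-x) ^ (b-1)
      = Real.Gamma a * Real.Gamma b / Real.Gamma (a+b) := by
  have key := Complex.Gamma_mul_Gamma_eq_betaIntegral (s := (a:ℂ)) (t := (b:ℂ))
    (by simpa using ha) (by simpa using hb)
  have hbeta : Complex.betaIntegral a b
      = ((∫ x in Ioo (0:ℝ) 1, x ^ (a-1) * (1-x) ^ (b-1) : ℝ) : ℂ) := by
    rw [← MeasureTheory.integral_Ioc_eq_integral_Ioo,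
      ← intervalIntegral.integral_of_le (by norm_num : (0:ℝ) ≤ 1)]
    rw [Complex.betaIntegral, ← intervalIntegral.integral_ofReal]
    apply intervalIntegral.integral_congr
    intro x hx
    rw [uIcc_of_le (by norm_num : (0:ℝ) ≤ 1)] at hx
    push_cast
    rw [Complex.ofReal_cpow hx.1, Complex.ofReal_cpow (by linarith [hx.2] : (0:ℝ) ≤ 1 - x)]
    push_cast
    ring
  rw [hbeta, Complex.Gamma_ofReal, Complex.Gamma_ofReal, ← Complex.ofReal_add,
    Complex.Gamma_ofReal] at key
  have hne : Real.Gamma (a+b) ≠ 0 := (Real.Gamma_pos_of_pos (by linarith)).ne'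
  have := key
  rw [← Complex.ofReal_mul, ← Complex.ofReal_mul, Complex.ofReal_inj] at this
  field_simp
  linarith [this]

lemma key_bound {α x : ℝ} (hα : 0 ≤ α) (hx0 : 0 ≤ x) (hx1 : x ≤ 1) :
    1 - x ^ α ≤ (α + 1) * (1 - x) := by
  rcases eq_or_lt_of_le hx0 with h0 | h0
  · rcases eq_or_lt_of_le hα with ha | ha
    · rw [← h0, ← ha, Real.rpow_zero]; nlinarith
    · rw [← h0, Real.zero_rpow ha.ne']; nlinarith
  rcases le_or_gt α 1 with h1 | h1
  · have : x ^ (1:ℝ) ≤ x ^ α := Real.rpow_le_rpow_of_exponent_ge h0 hx1 h1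
    rw [Real.rpow_one] at this
    nlinarith
  · have := one_add_mul_self_le_rpow_one_add (s := x - 1) (by linarith) h1.le
    have h2 : (1 : ℝ) + (x - 1) = x := by ring
    rw [h2] at this
    nlinarith

lemma one_sub_rpow_nonneg {α x : ℝ} (hα : 0 ≤ α) (hx0 : 0 ≤ x) (hx1 : x ≤ 1) :
    0 ≤ 1 - x ^ α := by
  have := Real.rpow_le_one hx0 hx1 hα
  linarith

lemma A_int {α : ℝ} (hα : 0 ≤ α) :
    IntegrableOn (fun x : ℝ => (x ^ ((1:ℝ)/2) - x ^ (α + 1/2)) * (1-x) ^ (-(3/2) : ℝ))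
      (Ioo 0 1) volume := by
  have hb : IntegrableOn (fun x : ℝ => (α+1) * (x ^ (0:ℝ) * (1-x) ^ (-(1/2) : ℝ)))
      (Ioo 0 1) volume := (beta_int (by norm_num) (by norm_num)).const_mul _
  apply Integrable.mono' hb
  · apply ContinuousOn.aestronglyMeasurable _ measurableSet_Ioo
    apply ContinuousOn.mul
    · apply ContinuousOn.sub
      · exact (continuousOn_id.rpow_const fun x hx => Or.inl hx.1.ne')
      · exact (continuousOn_id.rpow_const fun x hx => Or.inl hx.1.ne')
    · exact ((continuousOn_const.sub continuousOn_id).rpow_const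
        fun x hx => Or.inl (by intro h; exact absurd (sub_eq_zero.mp h).symm hx.2.ne))
  · rw [ae_restrict_iff' measurableSet_Ioo]
    refine ae_of_all _ fun x hx => ?_
    obtain ⟨hx0, hx1⟩ := hx
    have h1x : (0:ℝ) < 1 - x := by linarith
    have hsplit : x ^ (α + 1/2) = x ^ α * x ^ ((1:ℝ)/2) := by
      rw [Real.rpow_add hx0]
    have hnn : 0 ≤ x ^ ((1:ℝ)/2) - x ^ (α + 1/2) := by
      have := Real.rpow_le_rpow_of_exponent_ge hx0 hx1.le (by linarith : (1:ℝ)/2 ≤ α + 1/2)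
      linarith
    rw [Real.norm_eq_abs, abs_of_nonneg (by positivity)]
    have hfac : x ^ ((1:ℝ)/2) - x ^ (α + 1/2) = (1 - x ^ α) * x ^ ((1:ℝ)/2) := by
      rw [hsplit]; ring
    have hle : x ^ ((1:ℝ)/2) - x ^ (α + 1/2) ≤ (α+1) * (1-x) := by
      rw [hfac]
      have h1 : x ^ ((1:ℝ)/2) ≤ 1 := Real.rpow_le_one hx0.le hx1.le (by norm_num)
      have h2 := key_bound hα hx0.le hx1.le
      have h3 := one_sub_rpow_nonneg hα hx0.le hx1.le
      nlinarith
    calc (x ^ ((1:ℝ)/2) - x ^ (α + 1/2)) * (1-x) ^ (-(3/2) : ℝ)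
        ≤ ((α+1) * (1-x)) * (1-x) ^ (-(3/2) : ℝ) := by
          apply mul_le_mul_of_nonneg_right hle (by positivity)
      _ = (α+1) * (x ^ (0:ℝ) * (1-x) ^ (-(1/2) : ℝ)) := by
          rw [Real.rpow_zero, show (-(1/2):ℝ) = 1 + (-(3/2)) by norm_num,
            Real.rpow_add h1x, Real.rpow_one]
          ring

lemma v_int {α : ℝ} (hα : 0 ≤ α) :
    IntegrableOn (fun x : ℝ =>
        (x ^ (-(1/2):ℝ) - (2*α+1) * x ^ (α-1/2)) * (1-x) ^ (-(1/2):ℝ)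
          + (x ^ ((1:ℝ)/2) - x ^ (α+1/2)) * (1-x) ^ (-(3/2):ℝ))
      (Ioo 0 1) volume := by
  have h1 : IntegrableOn (fun x : ℝ => x ^ (-(1/2):ℝ) * (1-x) ^ (-(1/2):ℝ)) (Ioo 0 1) volume :=
    beta_int (by norm_num) (by norm_num)
  have h2 : IntegrableOn (fun x : ℝ => (2*α+1) * (x ^ (α-1/2) * (1-x) ^ (-(1/2):ℝ)))
      (Ioo 0 1) volume := (beta_int (by linarith) (by norm_num)).const_mul _
  have h3 := A_int hα
  have H := (h1.sub h2).add h3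
  apply MeasureTheory.IntegrableOn.congr_fun H ?_ measurableSet_Ioo
  intro x _
  simp only [Pi.add_apply, Pi.sub_apply]
  ring

lemma v_zero {α : ℝ} (hα : 0 ≤ α) :
    ∫ x in Ioo (0:ℝ) 1,
        ((x ^ (-(1/2):ℝ) - (2*α+1) * x ^ (α-1/2)) * (1-x) ^ (-(1/2):ℝ)
          + (x ^ ((1:ℝ)/2) - x ^ (α+1/2)) * (1-x) ^ (-(3/2):ℝ)) = 0 := by
  set u : ℝ → ℝ := fun x => 2 * (x ^ ((1:ℝ)/2) - x ^ (α+1/2)) * (1-x) ^ (-(1/2):ℝ) with hu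
  have hderiv : ∀ x ∈ Ioo (0:ℝ) 1, HasDerivAt u
      ((x ^ (-(1/2):ℝ) - (2*α+1) * x ^ (α-1/2)) * (1-x) ^ (-(1/2):ℝ)
          + (x ^ ((1:ℝ)/2) - x ^ (α+1/2)) * (1-x) ^ (-(3/2):ℝ)) x := by
    intro x hx
    obtain ⟨hx0, hx1⟩ := hx
    have h1x : (0:ℝ) < 1 - x := by linarith
    have d1 : HasDerivAt (fun y : ℝ => y ^ ((1:ℝ)/2)) ((1/2) * x ^ ((1:ℝ)/2 - 1)) x :=
      Real.hasDerivAt_rpow_const (Or.inl hx0.ne')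
    have d2 : HasDerivAt (fun y : ℝ => y ^ (α+1/2)) ((α+1/2) * x ^ (α+1/2 - 1)) x :=
      Real.hasDerivAt_rpow_const (Or.inl hx0.ne')
    have d3 := (HasDerivAt.const_sub 1 (hasDerivAt_id' (x := x))).rpow_const
      (p := (-(1/2):ℝ)) (Or.inl h1x.ne')
    have := (((d1.sub d2).const_mul 2).mul d3)
    refine this.congr_deriv ?_
    simp only [Pi.sub_apply]
    rw [show ((1:ℝ)/2 - 1) = -(1/2) by norm_num,
      show (α+1/2 - 1) = α - 1/2 by ring,
      show ((-(1/2) - 1):ℝ) = -(3/2) by norm_num]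
    ring
  have hint : IntervalIntegrable (fun x : ℝ =>
      (x ^ (-(1/2):ℝ) - (2*α+1) * x ^ (α-1/2)) * (1-x) ^ (-(1/2):ℝ)
        + (x ^ ((1:ℝ)/2) - x ^ (α+1/2)) * (1-x) ^ (-(3/2):ℝ)) volume 0 1 := by
    rw [intervalIntegrable_iff_integrableOn_Ioo_of_le (by norm_num)]
    exact v_int hα
  have tend0 : Tendsto u (nhdsWithin 0 (Ioi 0)) (nhds 0) := by
    have hc : ContinuousAt u 0 := by
      apply ContinuousAt.mul
      · apply ContinuousAt.mul continuousAt_const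
        apply ContinuousAt.sub
        · exact (Real.continuousAt_rpow_const _ _ (Or.inr (by norm_num)))
        · exact (Real.continuousAt_rpow_const _ _ (Or.inr (by linarith)))
      · exact (continuousAt_const.sub continuousAt_id).rpow_const (Or.inl (by norm_num))
    have h0 : u 0 = 0 := by
      simp only [hu]
      rw [Real.zero_rpow (by norm_num : ((1:ℝ)/2) ≠ 0),
        Real.zero_rpow (by positivity : (α+1/2) ≠ 0)]
      ring
    have := hc.tendsto
    rw [h0] at this
    exact this.mono_left nhdsWithin_le_nhds
  have tend1 : Tendsto u (nhdsWithin 1 (Iio 1)) (nhds 0) := by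
    have hmem : Ioo (0:ℝ) 1 ∈ nhdsWithin 1 (Iio 1) :=
      Ioo_mem_nhdsLT_of_mem (by norm_num : (1:ℝ) ∈ Ioc 0 1)
    apply squeeze_zero' (g := fun x : ℝ => 2 * (α+1) * (1-x) ^ ((1:ℝ)/2))
    · filter_upwards [hmem] with x hx
      obtain ⟨hx0, hx1⟩ := hx
      have hnn : 0 ≤ x ^ ((1:ℝ)/2) - x ^ (α+1/2) := by
        have := Real.rpow_le_rpow_of_exponent_ge hx0 hx1.le (by linarith : (1:ℝ)/2 ≤ α + 1/2)
        linarith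
      have : (0:ℝ) < 1 - x := by linarith
      positivity
    · filter_upwards [hmem] with x hx
      obtain ⟨hx0, hx1⟩ := hx
      have h1x : (0:ℝ) < 1 - x := by linarith
      have hfac : x ^ ((1:ℝ)/2) - x ^ (α+1/2) = (1 - x ^ α) * x ^ ((1:ℝ)/2) := by
        rw [Real.rpow_add hx0]; ring
      have h1 : x ^ ((1:ℝ)/2) ≤ 1 := Real.rpow_le_one hx0.le hx1.le (by norm_num)
      have h2 := key_bound hα hx0.le hx1.le
      have h3 := one_sub_rpow_nonneg hα hx0.le hx1.le
      have hle : x ^ ((1:ℝ)/2) - x ^ (α+1/2) ≤ (α+1) * (1-x) := by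
        rw [hfac]; nlinarith
      have e4 : (1-x) * (1-x) ^ (-(1/2):ℝ) = (1-x) ^ ((1:ℝ)/2) := by
        have h := Real.rpow_add h1x 1 (-(1/2))
        rw [Real.rpow_one] at h
        rw [← h]
        norm_num
      have hc1 : (0:ℝ) ≤ (1-x) ^ (-(1/2):ℝ) := by positivity
      calc u x = (x ^ ((1:ℝ)/2) - x ^ (α+1/2)) * (1-x) ^ (-(1/2):ℝ) * 2 := by
            simp only [hu]; ring
        _ ≤ ((α+1) * (1-x)) * (1-x) ^ (-(1/2):ℝ) * 2 := by
            apply mul_le_mul_of_nonneg_right (mul_le_mul_of_nonneg_right hle hc1) (by norm_num)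
        _ = 2 * (α+1) * (1-x) ^ ((1:ℝ)/2) := by rw [mul_assoc ((α:ℝ)+1), e4]; ring
    · have hc : ContinuousAt (fun x : ℝ => 2 * (α+1) * (1-x) ^ ((1:ℝ)/2)) 1 := by
        apply ContinuousAt.mul continuousAt_const
        exact (continuousAt_const.sub continuousAt_id).rpow_const (Or.inr (by norm_num))
      have := hc.tendsto.mono_left (nhdsWithin_le_nhds (s := Iio 1))
      convert this using 2
      norm_num [Real.zero_rpow]
  have := intervalIntegral.integral_eq_sub_of_hasDerivAt_of_tendsto (by norm_num : (0:ℝ) < 1)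
    hderiv hint tend0 tend1
  rw [intervalIntegral.integral_of_le (by norm_num : (0:ℝ) ≤ 1),
    MeasureTheory.integral_Ioc_eq_integral_Ioo] at this
  rw [this]
  ring

lemma g_eval {α : ℝ} (hα : 0 ≤ α) :
    ∫ x in Ioo (0:ℝ) 1, (1 - x ^ α) * (x^2*(3-2*x)) * (x*(1-x)) ^ (-(3/2):ℝ)
      = (2*α+1) * (Real.Gamma (α+1/2) * Real.Gamma (1/2) / Real.Gamma (α+1))
        - 2 * (Real.Gamma (α+3/2) * Real.Gamma (1/2) / Real.Gamma (α+2)) := by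
  have i1 : IntegrableOn (fun x : ℝ => (-1 : ℝ) * (x ^ (-(1/2):ℝ) * (1-x) ^ (-(1/2):ℝ)))
      (Ioo 0 1) volume := (beta_int (by norm_num) (by norm_num)).const_mul _
  have i2 : IntegrableOn (fun x : ℝ => (2*α+1) * (x ^ (α-1/2) * (1-x) ^ (-(1/2):ℝ)))
      (Ioo 0 1) volume := (beta_int (by linarith) (by norm_num)).const_mul _
  have i3 : IntegrableOn (fun x : ℝ => (2 : ℝ) * (x ^ ((1:ℝ)/2) * (1-x) ^ (-(1/2):ℝ)))
      (Ioo 0 1) volume := (beta_int (by norm_num) (by norm_num)).const_mul _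
  have i4 : IntegrableOn (fun x : ℝ => (-2 : ℝ) * (x ^ (α+1/2) * (1-x) ^ (-(1/2):ℝ)))
      (Ioo 0 1) volume := (beta_int (by linarith) (by norm_num)).const_mul _
  have hw12 : IntegrableOn (fun x : ℝ => (-1 : ℝ) * (x ^ (-(1/2):ℝ) * (1-x) ^ (-(1/2):ℝ))
      + (2*α+1) * (x ^ (α-1/2) * (1-x) ^ (-(1/2):ℝ))) (Ioo 0 1) volume := by
    exact i1.add i2
  have hw123 : IntegrableOn (fun x : ℝ => (-1 : ℝ) * (x ^ (-(1/2):ℝ) * (1-x) ^ (-(1/2):ℝ))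
      + (2*α+1) * (x ^ (α-1/2) * (1-x) ^ (-(1/2):ℝ))
      + (2 : ℝ) * (x ^ ((1:ℝ)/2) * (1-x) ^ (-(1/2):ℝ))) (Ioo 0 1) volume := by
    exact hw12.add i3
  have hw : IntegrableOn (fun x : ℝ => (-1 : ℝ) * (x ^ (-(1/2):ℝ) * (1-x) ^ (-(1/2):ℝ))
      + (2*α+1) * (x ^ (α-1/2) * (1-x) ^ (-(1/2):ℝ))
      + (2 : ℝ) * (x ^ ((1:ℝ)/2) * (1-x) ^ (-(1/2):ℝ))
      + (-2 : ℝ) * (x ^ (α+1/2) * (1-x) ^ (-(1/2):ℝ))) (Ioo 0 1) volume := by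
    exact hw123.add i4
  have hcongr : (∫ x in Ioo (0:ℝ) 1, (1 - x ^ α) * (x^2*(3-2*x)) * (x*(1-x)) ^ (-(3/2):ℝ))
      = ∫ x in Ioo (0:ℝ) 1,
        (((x ^ (-(1/2):ℝ) - (2*α+1) * x ^ (α-1/2)) * (1-x) ^ (-(1/2):ℝ)
            + (x ^ ((1:ℝ)/2) - x ^ (α+1/2)) * (1-x) ^ (-(3/2):ℝ))
          + ((-1 : ℝ) * (x ^ (-(1/2):ℝ) * (1-x) ^ (-(1/2):ℝ))
            + (2*α+1) * (x ^ (α-1/2) * (1-x) ^ (-(1/2):ℝ))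
            + (2 : ℝ) * (x ^ ((1:ℝ)/2) * (1-x) ^ (-(1/2):ℝ))
            + (-2 : ℝ) * (x ^ (α+1/2) * (1-x) ^ (-(1/2):ℝ)))) := by
    apply MeasureTheory.setIntegral_congr_fun measurableSet_Ioo
    intro x hx
    obtain ⟨hx0, hx1⟩ := hx
    dsimp only
    have h1x : (0:ℝ) < 1 - x := by linarith
    have e1 : (x*(1-x)) ^ (-(3/2):ℝ) = x ^ (-(3/2):ℝ) * (1-x) ^ (-(3/2):ℝ) :=
      Real.mul_rpow hx0.le h1x.le
    have e2 : (x:ℝ)^2 * x ^ (-(3/2):ℝ) = x ^ ((1:ℝ)/2) := by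
      rw [← Real.rpow_natCast x 2, ← Real.rpow_add hx0]; norm_num
    have e3 : x ^ α * x ^ ((1:ℝ)/2) = x ^ (α+1/2) := by rw [← Real.rpow_add hx0]
    have e4 : (1-x) * (1-x) ^ (-(3/2):ℝ) = (1-x) ^ (-(1/2):ℝ) := by
      have h := Real.rpow_add h1x 1 (-(3/2))
      rw [Real.rpow_one] at h
      rw [← h]
      norm_num
    rw [e1]
    linear_combination ((1-x^α)*(3-2*x)*(1-x) ^ (-(3/2):ℝ)) * e2
      - ((3-2*x)*(1-x) ^ (-(3/2):ℝ)) * e3 + (2*(x ^ ((1:ℝ)/2) - x ^ (α+1/2))) * e4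
  have b1 : ∫ x in Ioo (0:ℝ) 1, x ^ (-(1/2):ℝ) * (1-x) ^ (-(1/2):ℝ)
      = Real.Gamma (1/2) * Real.Gamma (1/2) / Real.Gamma 1 := by
    have h := beta_val (a := (1/2:ℝ)) (b := (1/2:ℝ)) (by norm_num) (by norm_num)
    rw [show ((1:ℝ)/2 - 1) = -(1/2) by norm_num, show ((1:ℝ)/2 + 1/2) = 1 by norm_num] at h
    exact h
  have b2 : ∫ x in Ioo (0:ℝ) 1, x ^ (α-1/2) * (1-x) ^ (-(1/2):ℝ)
      = Real.Gamma (α+1/2) * Real.Gamma (1/2) / Real.Gamma (α+1) := by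
    have h := beta_val (a := α+1/2) (b := (1/2:ℝ)) (by linarith) (by norm_num)
    rw [show (α+1/2 - 1) = α - 1/2 by ring, show ((1:ℝ)/2 - 1) = -(1/2) by norm_num,
      show (α+1/2 + 1/2) = α+1 by ring] at h
    exact h
  have b3 : ∫ x in Ioo (0:ℝ) 1, x ^ ((1:ℝ)/2) * (1-x) ^ (-(1/2):ℝ)
      = Real.Gamma (3/2) * Real.Gamma (1/2) / Real.Gamma 2 := by
    have h := beta_val (a := (3/2:ℝ)) (b := (1/2:ℝ)) (by norm_num) (by norm_num)
    rw [show ((3:ℝ)/2 - 1) = (1:ℝ)/2 by norm_num, show ((1:ℝ)/2 - 1) = -(1/2) by norm_num,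
      show ((3:ℝ)/2 + 1/2) = 2 by norm_num] at h
    exact h
  have b4 : ∫ x in Ioo (0:ℝ) 1, x ^ (α+1/2) * (1-x) ^ (-(1/2):ℝ)
      = Real.Gamma (α+3/2) * Real.Gamma (1/2) / Real.Gamma (α+2) := by
    have h := beta_val (a := α+3/2) (b := (1/2:ℝ)) (by linarith) (by norm_num)
    rw [show (α+3/2 - 1) = α + 1/2 by ring, show ((1:ℝ)/2 - 1) = -(1/2) by norm_num,
      show (α+3/2 + 1/2) = α+2 by ring] at h
    exact h
  have hG32 : Real.Gamma (3/2) = (1/2) * Real.Gamma (1/2) := by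
    rw [show ((3:ℝ)/2) = 1/2 + 1 by norm_num, Real.Gamma_add_one (by norm_num : ((1:ℝ)/2) ≠ 0)]
  rw [hcongr, MeasureTheory.integral_add (v_int hα) hw, v_zero hα, zero_add,
    MeasureTheory.integral_add hw123 i4, MeasureTheory.integral_add hw12 i3,
    MeasureTheory.integral_add i1 i2,
    MeasureTheory.integral_const_mul, MeasureTheory.integral_const_mul,
    MeasureTheory.integral_const_mul, MeasureTheory.integral_const_mul,
    b1, b2, b3, b4, hG32, Real.Gamma_one, Real.Gamma_two]
  ring

lemma g_int {α : ℝ} (hα : 0 ≤ α) :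
    IntegrableOn (fun x : ℝ => (1 - x ^ α) * (x^2*(3-2*x)) * (x*(1-x)) ^ (-(3/2):ℝ))
      (Ioo 0 1) volume := by
  have i1 : IntegrableOn (fun x : ℝ => x ^ (-(1/2):ℝ) * (1-x) ^ (-(1/2):ℝ))
      (Ioo 0 1) volume := beta_int (by norm_num) (by norm_num)
  have i2 : IntegrableOn (fun x : ℝ => (2*α+1) * (x ^ (α-1/2) * (1-x) ^ (-(1/2):ℝ)))
      (Ioo 0 1) volume := (beta_int (by linarith) (by norm_num)).const_mul _
  have i3 : IntegrableOn (fun x : ℝ => (2 : ℝ) * (x ^ ((1:ℝ)/2) * (1-x) ^ (-(1/2):ℝ)))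
      (Ioo 0 1) volume := (beta_int (by norm_num) (by norm_num)).const_mul _
  have i4 : IntegrableOn (fun x : ℝ => (2 : ℝ) * (x ^ (α+1/2) * (1-x) ^ (-(1/2):ℝ)))
      (Ioo 0 1) volume := (beta_int (by linarith) (by norm_num)).const_mul _
  have H : IntegrableOn (fun x : ℝ =>
      ((x ^ (-(1/2):ℝ) - (2*α+1) * x ^ (α-1/2)) * (1-x) ^ (-(1/2):ℝ)
        + (x ^ ((1:ℝ)/2) - x ^ (α+1/2)) * (1-x) ^ (-(3/2):ℝ))
      - (x ^ (-(1/2):ℝ) * (1-x) ^ (-(1/2):ℝ))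
      + (2*α+1) * (x ^ (α-1/2) * (1-x) ^ (-(1/2):ℝ))
      + (2 : ℝ) * (x ^ ((1:ℝ)/2) * (1-x) ^ (-(1/2):ℝ))
      - (2 : ℝ) * (x ^ (α+1/2) * (1-x) ^ (-(1/2):ℝ))) (Ioo 0 1) volume := by
    exact ((((v_int hα).sub i1).add i2).add i3).sub i4
  apply MeasureTheory.IntegrableOn.congr_fun H ?_ measurableSet_Ioo
  intro x hx
  obtain ⟨hx0, hx1⟩ := hx
  dsimp only
  have h1x : (0:ℝ) < 1 - x := by linarith
  have e1 : (x*(1-x)) ^ (-(3/2):ℝ) = x ^ (-(3/2):ℝ) * (1-x) ^ (-(3/2):ℝ) :=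
    Real.mul_rpow hx0.le h1x.le
  have e2 : (x:ℝ)^2 * x ^ (-(3/2):ℝ) = x ^ ((1:ℝ)/2) := by
    rw [← Real.rpow_natCast x 2, ← Real.rpow_add hx0]; norm_num
  have e3 : x ^ α * x ^ ((1:ℝ)/2) = x ^ (α+1/2) := by rw [← Real.rpow_add hx0]
  have e4 : (1-x) * (1-x) ^ (-(3/2):ℝ) = (1-x) ^ (-(1/2):ℝ) := by
    have h := Real.rpow_add h1x 1 (-(3/2))
    rw [Real.rpow_one] at h
    rw [← h]
    norm_num
  rw [e1]
  linear_combination -((1-x^α)*(3-2*x)*(1-x) ^ (-(3/2):ℝ)) * e2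
    + ((3-2*x)*(1-x) ^ (-(3/2):ℝ)) * e3 - (2*(x ^ ((1:ℝ)/2) - x ^ (α+1/2))) * e4

noncomputable def gaux (α : ℝ) : ℝ → ℝ :=
  fun t => (1 - t ^ α) * (t^2*(3-2*t)) * (t*(1-t)) ^ (-(3/2):ℝ)

theorem integral_Phi (α : ℝ) (hα : 0 ≤ α) :
    (1 / Real.sqrt (2 * π)) *
        ∫ x in Set.Ioo (0 : ℝ) 1,
          (1 - x ^ α * cfun x - (1 - x) ^ α * cfun (1 - x)) *
            (x * (1 - x)) ^ (-(3 / 2) : ℝ) =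
      2 * Real.sqrt 2 * α * Real.Gamma (3 / 2 + α) / Real.Gamma (2 + α) := by
  have hgi : IntegrableOn (fun x : ℝ => gaux α x) (Ioo 0 1) volume := g_int hα
  have hgII : IntervalIntegrable (gaux α) volume 0 1 := by
    rw [intervalIntegrable_iff_integrableOn_Ioo_of_le (by norm_num)]
    exact hgi
  have hgrefl : IntegrableOn (fun x : ℝ => gaux α (1-x)) (Ioo 0 1) volume := by
    have h := (hgII.comp_sub_left 1).symm
    norm_num at h
    rw [intervalIntegrable_iff_integrableOn_Ioo_of_le (by norm_num)] at h
    exact h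
  have hsum : (∫ x in Set.Ioo (0 : ℝ) 1,
          (1 - x ^ α * cfun x - (1 - x) ^ α * cfun (1 - x)) *
            (x * (1 - x)) ^ (-(3 / 2) : ℝ))
      = ∫ x in Set.Ioo (0 : ℝ) 1, (gaux α x + gaux α (1-x)) := by
    apply MeasureTheory.setIntegral_congr_fun measurableSet_Ioo
    intro x hx
    obtain ⟨hx0, hx1⟩ := hx
    simp only [gaux, cfun]
    rw [show ((1-x)*(1-(1-x))) = x*(1-x) by ring]
    ring
  have hrefl : ∫ x in Set.Ioo (0:ℝ) 1, gaux α (1-x) = ∫ x in Set.Ioo (0:ℝ) 1, gaux α x := by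
    rw [← MeasureTheory.integral_Ioc_eq_integral_Ioo, ← MeasureTheory.integral_Ioc_eq_integral_Ioo,
      ← intervalIntegral.integral_of_le (by norm_num : (0:ℝ) ≤ 1),
      ← intervalIntegral.integral_of_le (by norm_num : (0:ℝ) ≤ 1)]
    have h := intervalIntegral.integral_comp_sub_left (a := (0:ℝ)) (b := 1) (gaux α) 1
    rw [show (1:ℝ) - 1 = 0 by norm_num, show (1:ℝ) - 0 = 1 by norm_num] at h
    exact h
  have hval : ∫ x in Set.Ioo (0:ℝ) 1, gaux α x
      = (2*α+1) * (Real.Gamma (α+1/2) * Real.Gamma (1/2) / Real.Gamma (α+1))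
        - 2 * (Real.Gamma (α+3/2) * Real.Gamma (1/2) / Real.Gamma (α+2)) := g_eval hα
  rw [hsum, MeasureTheory.integral_add hgi hgrefl, hrefl, hval]
  have hG1 : Real.Gamma (α+3/2) = (α+1/2) * Real.Gamma (α+1/2) := by
    rw [show α+3/2 = (α+1/2) + 1 by ring, Real.Gamma_add_one (by positivity)]
  have hG2 : Real.Gamma (α+2) = (α+1) * Real.Gamma (α+1) := by
    rw [show α+2 = (α+1) + 1 by ring, Real.Gamma_add_one (by positivity)]
  rw [show (3/2 + α : ℝ) = α + 3/2 by ring, show (2 + α : ℝ) = α + 2 by ring,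
    hG1, hG2, Real.Gamma_one_half_eq,
    Real.sqrt_mul (by norm_num : (0:ℝ) ≤ 2) π]
  have hs2 : Real.sqrt 2 * Real.sqrt 2 = 2 := Real.mul_self_sqrt (by norm_num)
  have hπ : (0:ℝ) < Real.sqrt π := Real.sqrt_pos.mpr pi_pos
  have hs0 : (0:ℝ) < Real.sqrt 2 := by norm_num
  have hH : (0:ℝ) < Real.Gamma (α+1) := Real.Gamma_pos_of_pos (by linarith)
  have hα1 : α + 1 ≠ 0 := by positivity
  field_simp
  ring_nf
  rw [Real.sq_sqrt (by norm_num : (0:ℝ) ≤ 2)]
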